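/- Let N ≥ 1, let Ω ⊆ ℝ^N be a nonempty open set, let u₁, u₂ ∈ L¹(Ω;ℂ), and let U₁, U₂ : Ω → ℂ be measurable functions such that for j = 1,2 one has |U_j(x)| ≤ 1 for almost every x ∈ Ω and U_j(x) = u_j(x)/|u_j(x)| for almost every x ∈ Ω with u_j(x) ≠ 0. Then Re ∫_Ω (U₁(x) − U₂(x)) · conj(u₁(x) − u₂(x)) dx ≥ 0. -/

import Mathlib

open MeasureTheory Complex

lemma sat_key (c z : ℂ) (hcz : z ≠ 0 → c = z / (‖z‖ : ℂ)) :
    (c * (starRingEnd ℂ) z).re = ‖z‖ := by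
  by_cases h : z = 0
  · simp [h]
  · have hz : (‖z‖ : ℂ) ≠ 0 := by
      exact_mod_cast Complex.ofReal_ne_zero.mpr (norm_ne_zero_iff.mpr h)
    have : c * (starRingEnd ℂ) z = ((‖z‖ : ℝ) : ℂ) := by
      rw [hcz h, div_mul_eq_mul_div, Complex.mul_conj, Complex.normSq_eq_norm_sq]
      push_cast
      rw [sq]
      field_simp
    rw [this, Complex.ofReal_re]

lemma sat_aux (a b x y : ℂ) (ha : ‖a‖ ≤ 1) (hb : ‖b‖ ≤ 1)
    (hax : x ≠ 0 → a = x / (‖x‖ : ℂ)) (hby : y ≠ 0 → b = y / (‖y‖ : ℂ)) :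
    0 ≤ ((a - b) * (starRingEnd ℂ) (x - y)).re := by
  have e : ((a - b) * (starRingEnd ℂ) (x - y)).re =
      (a * (starRingEnd ℂ) x).re - (a * (starRingEnd ℂ) y).re
        - (b * (starRingEnd ℂ) x).re + (b * (starRingEnd ℂ) y).re := by
    simp [map_sub, mul_sub, sub_mul, Complex.sub_re, Complex.add_re]
    ring_nf
  have bnd : ∀ (c z : ℂ), ‖c‖ ≤ 1 → (c * (starRingEnd ℂ) z).re ≤ ‖z‖ := by
    intro c z hc
    calc (c * (starRingEnd ℂ) z).re ≤ ‖c * (starRingEnd ℂ) z‖ := Complex.re_le_norm _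
      _ = ‖c‖ * ‖z‖ := by rw [norm_mul, RCLike.norm_conj]
      _ ≤ 1 * ‖z‖ := by gcongr
      _ = ‖z‖ := one_mul _
  rw [e, sat_key a x hax, sat_key b y hby]
  have h1 := bnd a y ha
  have h2 := bnd b x hb
  linarith

/-- Monotonicity of saturated sections (Lemma 7.1 of the paper):
if `U_j` are saturated sections associated to `u_j ∈ L¹(Ω;ℂ)`, then
`Re ∫_Ω (U₁ - U₂) · conj(u₁ - u₂) ≥ 0`. -/
theorem saturated_sections_monotone
    (N : ℕ) (hN : 1 ≤ N)
    (Ω : Set (EuclideanSpace ℝ (Fin N))) (hΩ : IsOpen Ω) (hΩne : Ω.Nonempty)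
    (u₁ u₂ U₁ U₂ : EuclideanSpace ℝ (Fin N) → ℂ)
    (hu₁ : IntegrableOn u₁ Ω volume) (hu₂ : IntegrableOn u₂ Ω volume)
    (hU₁m : Measurable U₁) (hU₂m : Measurable U₂)
    (hU₁b : ∀ᵐ x ∂(volume.restrict Ω), ‖U₁ x‖ ≤ 1)
    (hU₂b : ∀ᵐ x ∂(volume.restrict Ω), ‖U₂ x‖ ≤ 1)
    (hU₁ : ∀ᵐ x ∂(volume.restrict Ω), u₁ x ≠ 0 → U₁ x = u₁ x / (‖u₁ x‖ : ℂ))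
    (hU₂ : ∀ᵐ x ∂(volume.restrict Ω), u₂ x ≠ 0 → U₂ x = u₂ x / (‖u₂ x‖ : ℂ)) :
    0 ≤ (∫ x in Ω, (U₁ x - U₂ x) * (starRingEnd ℂ) (u₁ x - u₂ x)).re := by
  have h0 : Integrable (fun x => u₁ x - u₂ x) (volume.restrict Ω) := hu₁.sub hu₂
  have hconj : Integrable (fun x => (starRingEnd ℂ) (u₁ x - u₂ x)) (volume.restrict Ω) := by
    refine h0.norm.mono' (Complex.continuous_conj.comp_aestronglyMeasurable h0.1) ?_
    filter_upwards with x
    rw [RCLike.norm_conj]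
  have hint : Integrable (fun x => (U₁ x - U₂ x) * (starRingEnd ℂ) (u₁ x - u₂ x))
      (volume.restrict Ω) := by
    apply hconj.bdd_mul (c := 2) ((hU₁m.sub hU₂m).aestronglyMeasurable)
    filter_upwards [hU₁b, hU₂b] with x h1 h2
    calc ‖U₁ x - U₂ x‖ ≤ ‖U₁ x‖ + ‖U₂ x‖ := norm_sub_le _ _
      _ ≤ 2 := by linarith
  rw [← RCLike.re_to_complex, ← integral_re hint]
  apply integral_nonneg_of_ae
  filter_upwards [hU₁b, hU₂b, hU₁, hU₂] with x h1b h2b h1 h2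
  simpa using sat_aux _ _ _ _ h1b h2b h1 h2
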